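/- Let z ∈ ℂ with Im(z²) ≠ 0 and let Φ = (Φ₁, Φ₂)ᵀ : ℝ → ℂ² be a nowhere-zero continuously differentiable solution of Φ_x = (-i z² σ₃ + z · offdiag(q, -\bar{q})) Φ for a C¹ function q : ℝ → ℂ. Define q⁽¹⁾ = ((z|Φ₂|² + \bar{z}|Φ₁|²)/(z|Φ₁|² + \bar{z}|Φ₂|²))² · (-q + 2i(z² - \bar{z}²)Φ₁\bar{Φ}₂/(z|Φ₂|² + \bar{z}|Φ₁|²)) and Φ⁽¹⁾ = (\bar{Φ}₂/(z|Φ₁|² + \bar{z}|Φ₂|²), \bar{Φ}₁/(\bar{z}|Φ₁|² + z|Φ₂|²))ᵀ. Then z|Φ₁|² + \bar{z}|Φ₂|² and \bar{z}|Φ₁|² + z|Φ₂|² never vanish, and Φ⁽¹⁾ satisfies Φ⁽¹⁾_x = (-i z² σ₃ + z · offdiag(q⁽¹⁾, -\bar{q}⁽¹⁾)) Φ⁽¹⁾. -/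

import Mathlib

open Complex

lemma hda_conj {f : ℝ → ℂ} {f' : ℂ} {x : ℝ} (hf : HasDerivAt f f' x) :
    HasDerivAt (fun y => (starRingEnd ℂ) (f y)) ((starRingEnd ℂ) f') x := by
  exact (Complex.conjCLE.toContinuousLinearMap.hasFDerivAt.comp_hasDerivAt x hf)

lemma normsq_eq (a : ℂ) : ((‖a‖ : ℂ)) ^ 2 = a * (starRingEnd ℂ) a := by
  rw [Complex.mul_conj, ← Complex.ofReal_pow, Complex.normSq_eq_norm_sq]


/-- Denominator `z|Φ₁|² + \bar z|Φ₂|²`. -/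
noncomputable def bdDenom1 (z Φ₁ Φ₂ : ℂ) : ℂ :=
  z * (‖Φ₁‖ : ℂ) ^ 2 + (starRingEnd ℂ) z * (‖Φ₂‖ : ℂ) ^ 2

/-- Denominator `\bar z|Φ₁|² + z|Φ₂|²`. -/
noncomputable def bdDenom2 (z Φ₁ Φ₂ : ℂ) : ℂ :=
  (starRingEnd ℂ) z * (‖Φ₁‖ : ℂ) ^ 2 + z * (‖Φ₂‖ : ℂ) ^ 2

/-- The Bäcklund-transformed potential
`q⁽¹⁾ = ((z|Φ₂|²+\bar z|Φ₁|²)/(z|Φ₁|²+\bar z|Φ₂|²))²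
  (-q + 2i(z²-\bar z²) Φ₁ \barΦ₂ / (z|Φ₂|²+\bar z|Φ₁|²))`. -/
noncomputable def backlundQ (z q Φ₁ Φ₂ : ℂ) : ℂ :=
  (bdDenom1 z Φ₂ Φ₁ / bdDenom1 z Φ₁ Φ₂) ^ 2 *
    (-q + 2 * Complex.I * (z ^ 2 - ((starRingEnd ℂ) z) ^ 2) * Φ₁ * (starRingEnd ℂ) Φ₂ /
        bdDenom1 z Φ₂ Φ₁)

/-- First component of the Bäcklund-transformed eigenvector. -/
noncomputable def backlundPhi1 (z Φ₁ Φ₂ : ℂ) : ℂ := (starRingEnd ℂ) Φ₂ / bdDenom1 z Φ₁ Φ₂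

/-- Second component of the Bäcklund-transformed eigenvector. -/
noncomputable def backlundPhi2 (z Φ₁ Φ₂ : ℂ) : ℂ := (starRingEnd ℂ) Φ₁ / bdDenom2 z Φ₁ Φ₂

lemma bdDenom1_eq (z a b : ℂ) :
    bdDenom1 z a b = z * (a * (starRingEnd ℂ) a) + (starRingEnd ℂ) z * (b * (starRingEnd ℂ) b) := by
  rw [bdDenom1, normsq_eq, normsq_eq]

lemma bdDenom2_eq (z a b : ℂ) :
    bdDenom2 z a b = (starRingEnd ℂ) z * (a * (starRingEnd ℂ) a) + z * (b * (starRingEnd ℂ) b) := by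
  rw [bdDenom2, normsq_eq, normsq_eq]

lemma bdDenom_ne (z : ℂ) (hz : (z ^ 2).im ≠ 0) (a b : ℂ) (h : ¬(a = 0 ∧ b = 0)) :
    bdDenom1 z a b ≠ 0 ∧ bdDenom2 z a b ≠ 0 := by
  have hre : z.re ≠ 0 := by
    intro h0
    apply hz
    rw [sq, Complex.mul_im, h0]; ring
  have hpos : 0 < ‖a‖ ^ 2 + ‖b‖ ^ 2 := by
    rcases not_and_or.mp h with h | h
    · have : 0 < ‖a‖ ^ 2 := pow_pos (norm_pos_iff.mpr h) 2
      nlinarith [sq_nonneg ‖b‖]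
    · have : 0 < ‖b‖ ^ 2 := pow_pos (norm_pos_iff.mpr h) 2
      nlinarith [sq_nonneg ‖a‖]
  have h1 : (bdDenom1 z a b).re = z.re * (‖a‖ ^ 2 + ‖b‖ ^ 2) := by
    simp [bdDenom1, ← Complex.ofReal_pow, Complex.add_re, Complex.mul_re]
    ring
  have h2 : (bdDenom2 z a b).re = z.re * (‖a‖ ^ 2 + ‖b‖ ^ 2) := by
    simp [bdDenom2, ← Complex.ofReal_pow, Complex.add_re, Complex.mul_re]
    ring
  constructor
  · intro h0; rw [h0] at h1
    exact mul_ne_zero hre (ne_of_gt hpos) h1.symm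
  · intro h0; rw [h0] at h2
    exact mul_ne_zero hre (ne_of_gt hpos) h2.symm

set_option maxHeartbeats 1000000 in
lemma value1 (z Z a b A B qq cq d1 d2 : ℂ)
    (hd : d1 = z * (a * A) + Z * (b * B) ∧ d2 = Z * (a * A) + z * (b * B))
    (h1 : d1 ≠ 0) (h2 : d2 ≠ 0) :
    -Complex.I * z ^ 2 * (B / d1)
      + z * ((d2 / d1) ^ 2 * (-qq + 2 * Complex.I * (z ^ 2 - Z ^ 2) * a * B / d2)) * (A / d2)
    = ((-Complex.I * Z ^ 2 * B - Z * qq * A) * d1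
        - B * (z * ((-Complex.I * z ^ 2 * a + z * qq * b) * A
              + a * (Complex.I * Z ^ 2 * A + Z * cq * B))
            + Z * ((Complex.I * z ^ 2 * b - z * cq * a) * B
              + b * (-Complex.I * Z ^ 2 * B - Z * qq * A)))) / d1 ^ 2 := by
  field_simp
  rw [hd.1, hd.2]
  ring

set_option maxHeartbeats 1000000 in
lemma value2 (z Z a b A B qq cq d1 d2 : ℂ)
    (hd : d1 = z * (a * A) + Z * (b * B) ∧ d2 = Z * (a * A) + z * (b * B))
    (h1 : d1 ≠ 0) (h2 : d2 ≠ 0) :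
    Complex.I * z ^ 2 * (A / d2)
      - z * ((d1 / d2) ^ 2 * (-cq + 2 * Complex.I * (z ^ 2 - Z ^ 2) * A * b / d1)) * (B / d1)
    = ((Complex.I * Z ^ 2 * A + Z * cq * B) * d2
        - A * (Z * ((-Complex.I * z ^ 2 * a + z * qq * b) * A
              + a * (Complex.I * Z ^ 2 * A + Z * cq * B))
            + z * ((Complex.I * z ^ 2 * b - z * cq * a) * B
              + b * (-Complex.I * Z ^ 2 * B - Z * qq * A)))) / d2 ^ 2 := by
  field_simp
  rw [hd.1, hd.2]
  ring

lemma bdDenom2_swap (z a b : ℂ) : bdDenom2 z a b = bdDenom1 z b a := by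
  rw [bdDenom1, bdDenom2, add_comm]

lemma conj_bdDenom1 (z a b : ℂ) : (starRingEnd ℂ) (bdDenom1 z a b) = bdDenom1 z b a := by
  rw [bdDenom1, bdDenom1, map_add, map_mul, map_mul, map_pow, map_pow,
    Complex.conj_conj, Complex.conj_ofReal, Complex.conj_ofReal, add_comm]

set_option maxHeartbeats 2000000 in
theorem backlund_x_part (z : ℂ) (hz : (z ^ 2).im ≠ 0) (q : ℝ → ℂ) (hq : ContDiff ℝ 1 q)
    (Φ₁ Φ₂ : ℝ → ℂ) (hnz : ∀ x : ℝ, ¬(Φ₁ x = 0 ∧ Φ₂ x = 0))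
    (hΦ₁ : ∀ x : ℝ, HasDerivAt Φ₁ (-Complex.I * z ^ 2 * Φ₁ x + z * q x * Φ₂ x) x)
    (hΦ₂ : ∀ x : ℝ, HasDerivAt Φ₂ (Complex.I * z ^ 2 * Φ₂ x
      - z * (starRingEnd ℂ) (q x) * Φ₁ x) x) :
    (∀ x : ℝ, bdDenom1 z (Φ₁ x) (Φ₂ x) ≠ 0 ∧ bdDenom2 z (Φ₁ x) (Φ₂ x) ≠ 0) ∧
    (∀ x : ℝ,
      HasDerivAt (fun y => backlundPhi1 z (Φ₁ y) (Φ₂ y))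
        (-Complex.I * z ^ 2 * backlundPhi1 z (Φ₁ x) (Φ₂ x)
          + z * backlundQ z (q x) (Φ₁ x) (Φ₂ x) * backlundPhi2 z (Φ₁ x) (Φ₂ x)) x ∧
      HasDerivAt (fun y => backlundPhi2 z (Φ₁ y) (Φ₂ y))
        (Complex.I * z ^ 2 * backlundPhi2 z (Φ₁ x) (Φ₂ x)
          - z * (starRingEnd ℂ) (backlundQ z (q x) (Φ₁ x) (Φ₂ x))
            * backlundPhi1 z (Φ₁ x) (Φ₂ x)) x) := by
  have hDne : ∀ x : ℝ, bdDenom1 z (Φ₁ x) (Φ₂ x) ≠ 0 ∧ bdDenom2 z (Φ₁ x) (Φ₂ x) ≠ 0 :=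
    fun x => bdDenom_ne z hz _ _ (hnz x)
  refine ⟨hDne, fun x => ?_⟩
  obtain ⟨h1, h2⟩ := hDne x
  have hca := hda_conj (hΦ₁ x)
  have hcb := hda_conj (hΦ₂ x)
  have hD1 : HasDerivAt (fun y => bdDenom1 z (Φ₁ y) (Φ₂ y))
      (z * ((-Complex.I * z ^ 2 * Φ₁ x + z * q x * Φ₂ x) * (starRingEnd ℂ) (Φ₁ x)
          + Φ₁ x * (starRingEnd ℂ) (-Complex.I * z ^ 2 * Φ₁ x + z * q x * Φ₂ x))
        + (starRingEnd ℂ) z * ((Complex.I * z ^ 2 * Φ₂ x - z * (starRingEnd ℂ) (q x) * Φ₁ x)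
            * (starRingEnd ℂ) (Φ₂ x)
          + Φ₂ x * (starRingEnd ℂ) (Complex.I * z ^ 2 * Φ₂ x
            - z * (starRingEnd ℂ) (q x) * Φ₁ x))) x := by
    have := (((hΦ₁ x).mul hca).const_mul z).add
      (((hΦ₂ x).mul hcb).const_mul ((starRingEnd ℂ) z))
    refine this.congr_of_eventuallyEq (Filter.Eventually.of_forall fun y => ?_); exact bdDenom1_eq _ _ _
  have hD2 : HasDerivAt (fun y => bdDenom2 z (Φ₁ y) (Φ₂ y))
      ((starRingEnd ℂ) z * ((-Complex.I * z ^ 2 * Φ₁ x + z * q x * Φ₂ x) * (starRingEnd ℂ) (Φ₁ x)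
          + Φ₁ x * (starRingEnd ℂ) (-Complex.I * z ^ 2 * Φ₁ x + z * q x * Φ₂ x))
        + z * ((Complex.I * z ^ 2 * Φ₂ x - z * (starRingEnd ℂ) (q x) * Φ₁ x)
            * (starRingEnd ℂ) (Φ₂ x)
          + Φ₂ x * (starRingEnd ℂ) (Complex.I * z ^ 2 * Φ₂ x
            - z * (starRingEnd ℂ) (q x) * Φ₁ x))) x := by
    have := (((hΦ₁ x).mul hca).const_mul ((starRingEnd ℂ) z)).add
      (((hΦ₂ x).mul hcb).const_mul z)
    refine this.congr_of_eventuallyEq (Filter.Eventually.of_forall fun y => ?_); exact bdDenom2_eq _ _ _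
  constructor
  · have h := hcb.div hD1 h1
    have hfeq : (fun y => backlundPhi1 z (Φ₁ y) (Φ₂ y))
        = fun y => (starRingEnd ℂ) (Φ₂ y) / bdDenom1 z (Φ₁ y) (Φ₂ y) := rfl
    rw [hfeq]
    refine h.congr_deriv ?_; symm
    have h2' : bdDenom1 z (Φ₂ x) (Φ₁ x) ≠ 0 := by rwa [← bdDenom2_swap]
    simp only [backlundPhi1, backlundPhi2, backlundQ, bdDenom2_swap, conj_bdDenom1,
      map_mul, map_add, map_sub, map_neg, map_pow, map_div₀, map_ofNat,
      Complex.conj_conj, Complex.conj_I]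
    linear_combination value1 z ((starRingEnd ℂ) z) (Φ₁ x) (Φ₂ x)
      ((starRingEnd ℂ) (Φ₁ x)) ((starRingEnd ℂ) (Φ₂ x)) (q x) ((starRingEnd ℂ) (q x))
      (bdDenom1 z (Φ₁ x) (Φ₂ x)) (bdDenom1 z (Φ₂ x) (Φ₁ x))
      ⟨by rw [bdDenom1_eq], by rw [bdDenom1_eq]; ring⟩ h1 h2'
  · have h := hca.div hD2 h2
    have hfeq : (fun y => backlundPhi2 z (Φ₁ y) (Φ₂ y))
        = fun y => (starRingEnd ℂ) (Φ₁ y) / bdDenom2 z (Φ₁ y) (Φ₂ y) := rfl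
    rw [hfeq]
    refine h.congr_deriv ?_; symm
    have h2' : bdDenom1 z (Φ₂ x) (Φ₁ x) ≠ 0 := by rwa [← bdDenom2_swap]
    simp only [backlundPhi1, backlundPhi2, backlundQ, bdDenom2_swap, conj_bdDenom1,
      map_mul, map_add, map_sub, map_neg, map_pow, map_div₀, map_ofNat,
      Complex.conj_conj, Complex.conj_I]
    linear_combination value2 z ((starRingEnd ℂ) z) (Φ₁ x) (Φ₂ x)
      ((starRingEnd ℂ) (Φ₁ x)) ((starRingEnd ℂ) (Φ₂ x)) (q x) ((starRingEnd ℂ) (q x))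
      (bdDenom1 z (Φ₁ x) (Φ₂ x)) (bdDenom1 z (Φ₂ x) (Φ₁ x))
      ⟨by rw [bdDenom1_eq], by rw [bdDenom1_eq]; ring⟩ h1 h2'
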